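/- Let γ > 0 be an irrational real number and let f(z) := exp(γ · Log z) be the principal branch of z^γ on D := ℂ \ {z ∈ ℝ : z ≤ 0}. If P ∈ ℂ[X,Y] satisfies P(z, f(z)) = 0 for all z ∈ D, then P is the zero polynomial; in particular f is not a complex Nash function on D. -/
import Mathlib

open Finset

lemma geom_indep_fin {n : ℕ} (w : Fin n → ℂ) (hw : Function.Injective w)
    (c : Fin n → ℂ) (h : ∀ m : ℕ, ∑ i, c i * w i ^ m = 0) : c = 0 := by
  have hdet : (Matrix.vandermonde w).det ≠ 0 := by
    rw [Matrix.det_vandermonde]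
    refine Finset.prod_ne_zero_iff.2 fun i _ => Finset.prod_ne_zero_iff.2 fun j hj => ?_
    exact sub_ne_zero.2 fun hEq => (Finset.mem_Ioi.mp hj).ne' (hw hEq)
  refine Matrix.eq_zero_of_vecMul_eq_zero hdet ?_
  funext j
  simpa [Matrix.vecMul, Matrix.vandermonde, dotProduct] using h j

/-- An irrational positive real power `z^γ := exp (γ ⬝ Log z)` (principal branch) on the slit
plane `D = ℂ \ {z ∈ ℝ : z ≤ 0}` satisfies no nontrivial polynomial identity: if
`P ∈ ℂ[X,Y]` vanishes at `(z, z^γ)` for all `z ∈ D`, then `P = 0`.  In particular `z^γ`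
is not a complex Nash function on `D`. -/
theorem stmt_9 (γ : ℝ) (hγ : Irrational γ) (hpos : 0 < γ)
    (P : MvPolynomial (Fin 2) ℂ)
    (hPf : ∀ z : ℂ, ¬ (z.im = 0 ∧ z.re ≤ 0) →
      MvPolynomial.eval ![z, Complex.exp ((γ : ℂ) * Complex.log z)] P = 0) :
    P = 0 := by
  classical
  set α : (Fin 2 →₀ ℕ) → ℝ := fun d => (d 0 : ℝ) + γ * d 1 with hαdef
  have hαinj : Function.Injective α := by
    intro d e hde
    simp only [hαdef] at hde
    have h1 : d 1 = e 1 := by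
      by_contra hne
      apply hγ
      refine ⟨((e 0 : ℚ) - d 0) / ((d 1 : ℚ) - e 1), ?_⟩
      have hq : ((d 1 : ℝ)) - e 1 ≠ 0 := sub_ne_zero.2 (by exact_mod_cast hne)
      push_cast
      rw [div_eq_iff hq]
      linarith
    have h0 : d 0 = e 0 := by
      have : (d 0 : ℝ) = e 0 := by rw [h1] at hde; linarith
      exact_mod_cast this
    ext i
    fin_cases i <;> assumption
  set w : (Fin 2 →₀ ℕ) → ℂ := fun d => Complex.exp ((α d : ℝ) : ℂ) with hwdef
  have hwinj : Function.Injective w := by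
    intro d e hde
    apply hαinj
    simp only [hwdef, ← Complex.ofReal_exp] at hde
    exact Real.exp_injective (by exact_mod_cast hde)
  have key : ∀ m : ℕ, ∑ d ∈ P.support, MvPolynomial.coeff d P * w d ^ m = 0 := by
    intro m
    have hz : ¬((Complex.exp (m : ℂ)).im = 0 ∧ (Complex.exp (m : ℂ)).re ≤ 0) := by
      rw [show ((m : ℂ)) = ((m : ℝ) : ℂ) by push_cast; rfl, ← Complex.ofReal_exp]
      simp [Real.exp_pos, not_le, (Real.exp_pos (m : ℝ)).le]
      intro _
      exact Real.exp_pos _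
    have h := hPf _ hz
    rw [MvPolynomial.eval_eq'] at h
    rw [← h]
    refine Finset.sum_congr rfl fun d _ => ?_
    rw [Fin.prod_univ_two]
    have hlog : Complex.log (Complex.exp (m : ℂ)) = (m : ℂ) := by
      apply Complex.log_exp <;> simp [Real.pi_pos, Real.pi_nonneg]
    rw [hlog]
    simp only [Matrix.cons_val_zero, Matrix.cons_val_one, Matrix.head_cons]
    rw [hwdef]
    simp only [← Complex.exp_nat_mul, ← Complex.exp_add]
    congr 1
    push_cast [hαdef]
    ring
  have hzero : ∀ d ∈ P.support, MvPolynomial.coeff d P = 0 := by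
    intro d hd
    set e := P.support.equivFin with hedef
    have hinj : Function.Injective (fun i : Fin P.support.card => w (e.symm i)) := by
      intro i j hij
      exact e.symm.injective (Subtype.ext (hwinj hij))
    have hsum : ∀ m : ℕ, ∑ i, (MvPolynomial.coeff (e.symm i : Fin 2 →₀ ℕ) P) *
        w (e.symm i) ^ m = 0 := by
      intro m
      rw [Equiv.sum_comp e.symm (fun x : P.support => MvPolynomial.coeff (x : Fin 2 →₀ ℕ) P * w x ^ m)]
      rw [Finset.sum_coe_sort P.support (fun x => MvPolynomial.coeff x P * w x ^ m)]
      exact key m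
    have := geom_indep_fin _ hinj _ hsum
    have h2 := congrFun this (e ⟨d, hd⟩)
    simpa using h2
  ext d
  by_cases hd : d ∈ P.support
  · simpa using hzero d hd
  · simpa using MvPolynomial.notMem_support_iff.mp hd
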